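/- Let K be an abelian topological group that is either compact or a torsion group (every element has finite order), and let X be a Hausdorff topological vector space over ℂ. Then every polynomial p ∈ P(K,X) is constant; that is, P(K,X) = P^0(K,X) consists exactly of the constant functions. -/

import Mathlib

set_option linter.unusedSectionVars false


open scoped BigOperators

/-- Forward difference operator: `delta h f t = f (t + h) - f t`. -/
def delta {J X : Type*} [Add J] [Sub X] (h : J) (f : J → X) : J → X :=
  fun t => f (t + h) - f t

/-- `f : J → X` is a (continuous) polynomial of degree at most `n`,
i.e. `f ∈ P^n(J, X)`. -/
def IsPolyDeg {J X : Type*} [Add J] [Sub X] [Zero X] [TopologicalSpace J] [TopologicalSpace X]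
    (n : ℕ) (f : J → X) : Prop :=
  Continuous f ∧ ∀ h : J, (delta h)^[n + 1] f = 0

open Filter Topology Pointwise

section Aux

variable {X : Type*} [AddCommGroup X] [Module ℂ X] [TopologicalSpace X]
  [IsTopologicalAddGroup X] [ContinuousSMul ℂ X] [T2Space X]

/-- Key induction: a polynomial sequence with "no linear growth" is constant. -/
lemma key_seq (P : (ℕ → X) → Prop)
    (hP : ∀ g, P g → P (delta 1 g))
    (hlin : ∀ g c, P g → (∀ m, g m = g 0 + m • c) → c = 0) :
    ∀ n (g : ℕ → X), P g → (delta 1)^[n + 1] g = 0 → ∀ m, g m = g 0 := by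
  intro n
  induction n with
  | zero =>
    intro g _ h0 m
    rw [Function.iterate_one] at h0
    induction m with
    | zero => rfl
    | succ k ih =>
      have h1 : g (k + 1) - g k = 0 := congrFun h0 k
      rw [sub_eq_zero] at h1
      rw [h1, ih]
  | succ n ih =>
    intro g hg h0 m
    have hg' := hP g hg
    have h0' : (delta 1)^[n + 1] (delta 1 g) = 0 := by
      rw [← Function.iterate_succ_apply]; exact h0
    have hc : ∀ m, delta 1 g m = delta 1 g 0 := ih _ hg' h0'
    set c := delta 1 g 0 with hcdef
    have hlin' : ∀ m, g m = g 0 + m • c := by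
      intro m
      induction m with
      | zero => simp
      | succ k ihk =>
        have h2 : g (k + 1) - g k = c := hc k
        rw [sub_eq_iff_eq_add] at h2
        rw [h2, ihk, succ_nsmul]
        abel
    have hc0 : c = 0 := hlin g c hg hlin'
    rw [hlin' m, hc0, smul_zero, add_zero]

lemma iter_rel {K : Type*} [AddCommGroup K] (p : K → X) (h t : K) :
    ∀ k m, (delta (1 : ℕ))^[k] (fun m => p (t + m • h)) m
      = (delta h)^[k] p (t + m • h) := by
  intro k
  induction k with
  | zero => intro m; rfl
  | succ k ihk =>
    intro m
    rw [Function.iterate_succ_apply', Function.iterate_succ_apply']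
    have key : t + (m + 1) • h = t + m • h + h := by rw [succ_nsmul, add_assoc]
    show (delta 1)^[k] _ (m + 1) - (delta 1)^[k] _ m = _
    rw [ihk (m + 1), ihk m, key]
    rfl

lemma isCompact_sub' {s t : Set X} (hs : IsCompact s) (ht : IsCompact t) :
    IsCompact (s - t) := by
  rw [← Set.sub_image_prod]
  exact (hs.prod ht).image continuous_sub

/-- the "no linear growth" hypothesis in the compact case. -/
lemma compact_nolin (g : ℕ → X) (c : X) (S : Set X) (hS : IsCompact S)
    (hmem : ∀ m, g m ∈ S) (hgc : ∀ m, g m = g 0 + m • c) : c = 0 := by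
  have hS2 : IsCompact (S - {g 0}) := isCompact_sub' hS isCompact_singleton
  letI : UniformSpace X := IsTopologicalAddGroup.rightUniformSpace X
  haveI : IsUniformAddGroup X := isUniformAddGroup_of_addCommGroup
  have hb : Bornology.IsVonNBounded ℂ (S - {g 0}) :=
    hS2.totallyBounded.isVonNBounded ℂ
  have hε : Tendsto (fun m : ℕ => ((m : ℂ))⁻¹) atTop (𝓝 0) := by
    rw [tendsto_zero_iff_norm_tendsto_zero]
    simp only [norm_inv, Complex.norm_natCast]
    exact tendsto_inv_atTop_zero.comp tendsto_natCast_atTop_atTop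
  have h1 : Tendsto (fun m : ℕ => ((m : ℂ))⁻¹ • (g m - g 0)) atTop (𝓝 0) := by
    refine hb.smul_tendsto_zero (Filter.Eventually.of_forall fun m => ?_) hε
    exact Set.sub_mem_sub (hmem m) rfl
  have h2 : ∀ᶠ m : ℕ in atTop, ((m : ℂ))⁻¹ • (g m - g 0) = c := by
    filter_upwards [eventually_ge_atTop 1] with m hm
    have hm0 : (m : ℂ) ≠ 0 := Nat.cast_ne_zero.mpr (by omega)
    rw [hgc m, add_sub_cancel_left, ← Nat.cast_smul_eq_nsmul ℂ, smul_smul,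
      inv_mul_cancel₀ hm0, one_smul]
  exact tendsto_nhds_unique tendsto_const_nhds (h1.congr' h2)

end Aux

/-- on an abelian topological group `K` which is compact or torsion,
every polynomial with values in a Hausdorff topological vector space `X` over `ℂ` is
constant: `P(K, X) = P^0(K, X)` and these are exactly the constant functions. -/
theorem polynomials_on_compact_or_torsion_group_constant
    {K X : Type*} [AddCommGroup K] [TopologicalSpace K] [IsTopologicalAddGroup K]
    [AddCommGroup X] [Module ℂ X] [TopologicalSpace X] [IsTopologicalAddGroup X]
    [ContinuousSMul ℂ X] [T2Space X]
    (hK : CompactSpace K ∨ ∀ t : K, IsOfFinAddOrder t)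
    (p : K → X) :
    ((∃ n : ℕ, IsPolyDeg n p) ↔ IsPolyDeg 0 p) ∧
    (IsPolyDeg 0 p ↔ ∃ c : X, p = fun _ => c) := by
  constructor
  · constructor
    · rintro ⟨n, hcont, hdel⟩
      refine ⟨hcont, fun h => ?_⟩
      rw [Function.iterate_one]
      funext t
      show p (t + h) - p t = 0
      rw [sub_eq_zero]
      set g : ℕ → X := fun m => p (t + m • h) with hgdef
      have hiter : (delta (1 : ℕ))^[n + 1] g = 0 := by
        funext m
        have e := iter_rel p h t (n + 1) m
        rw [hdel h] at e
        exact e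
      have hconst : ∀ m, g m = g 0 := by
        rcases hK with hcomp | htor
        · refine key_seq (fun g => ∃ S : Set X, IsCompact S ∧ ∀ m, g m ∈ S)
            ?_ ?_ n g ?_ hiter
          · rintro g ⟨S, hS, hmem⟩
            exact ⟨S - S, isCompact_sub' hS hS, fun m => Set.sub_mem_sub (hmem (m + 1)) (hmem m)⟩
          · rintro g c ⟨S, hS, hmem⟩ hgc
            exact compact_nolin g c S hS hmem hgc
          · exact ⟨Set.range p, isCompact_range hcont, fun m => ⟨t + m • h, rfl⟩⟩
        · have hN : 0 < addOrderOf h := (htor h).addOrderOf_pos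
          set N := addOrderOf h with hNdef
          refine key_seq (fun g => ∀ m, g (m + N) = g m) ?_ ?_ n g ?_ hiter
          · intro g hg m
            show g (m + N + 1) - g (m + N) = g (m + 1) - g m
            rw [show m + N + 1 = m + 1 + N by omega, hg (m + 1), hg m]
          · intro g c hg hgc
            have h1 : g N = g 0 := by
              have := hg 0; rwa [zero_add] at this
            rw [hgc N, add_eq_left] at h1
            have h2 : (N : ℂ) • c = 0 := by
              rw [Nat.cast_smul_eq_nsmul]
              exact h1
            rcases smul_eq_zero.mp h2 with hN0 | hc0
            · exact absurd hN0 (by exact_mod_cast hN.ne')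
            · exact hc0
          · intro m
            show p (t + (m + N) • h) = p (t + m • h)
            rw [add_nsmul, hNdef, addOrderOf_nsmul_eq_zero, add_zero]
      have h1 := hconst 1
      simpa [hgdef, one_nsmul, zero_nsmul] using h1
    · intro h0
      exact ⟨0, h0⟩
  · constructor
    · rintro ⟨hc, hd⟩
      refine ⟨p 0, ?_⟩
      funext t
      have e := congrFun (hd t) 0
      simp only [Function.iterate_one, delta, zero_add, Pi.zero_apply, sub_eq_zero] at e
      exact e
    · rintro ⟨c, rfl⟩
      refine ⟨continuous_const, fun h => ?_⟩
      funext t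
      simp [delta]
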